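/- Unitarity of face weights from unitarity of R: if R(z,λ) R^{(21)}(−z,λ) = Id_{V⊗V} and R is weight-zero, then the associated face weights satisfy Σ_g W(a,g,c,d,z) W(a,b,c,g,−z) = δ_{b,d} Id_{V[d−a]⊗V[c−d]}, where the sum is over weights g with g−a and c−g weights of V. -/
import Mathlib


open Matrix Filter Topology
open scoped BigOperators

noncomputable section

/- The Cartan subalgebra `𝔥` is identified with `ℂ^m = Fin m → ℂ` via an
orthonormal basis `(h_ν)`; a diagonalizable `𝔥`-module is a space `ℂ^ι`
together with a weight function `wt : ι → (Fin m → ℂ)`; `λ ∈ 𝔥` acts on the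
basis vector `i` by the scalar `⟨wt i, λ⟩ = Σ_ν (wt i) ν * λ ν`. -/

variable {m : ℕ}

/-- pairing `⟨μ, X⟩` of a weight with an element of `𝔥`. -/
def pairH (μ X : Fin m → ℂ) : ℂ := ∑ ν, μ ν * X ν

section Emb

variable {α β γ : Type*} [Fintype α] [Fintype β] [Fintype γ]
variable [DecidableEq α] [DecidableEq β] [DecidableEq γ]

/-- `F(λ + c h^{(3)})` acting on factors 1,2 of a triple tensor product:
`f(λ + c h^{(k)}) = Σ_μ P_μ^{(k)} f(λ + c μ)` via the weight projections. -/
def emb12sh (wt : γ → (Fin m → ℂ)) (c : ℂ)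
    (F : (Fin m → ℂ) → Matrix (α × β) (α × β) ℂ) (lam : Fin m → ℂ) :
    Matrix (α × β × γ) (α × β × γ) ℂ :=
  fun p q => F (lam + c • wt p.2.2) (p.1, p.2.1) (q.1, q.2.1) *
    (if p.2.2 = q.2.2 then 1 else 0)

/-- `F(λ + c h^{(2)})` acting on factors 1,3. -/
def emb13sh (wt : β → (Fin m → ℂ)) (c : ℂ)
    (F : (Fin m → ℂ) → Matrix (α × γ) (α × γ) ℂ) (lam : Fin m → ℂ) :
    Matrix (α × β × γ) (α × β × γ) ℂ :=
  fun p q => F (lam + c • wt p.2.1) (p.1, p.2.2) (q.1, q.2.2) *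
    (if p.2.1 = q.2.1 then 1 else 0)

/-- `F(λ + c h^{(1)})` acting on factors 2,3. -/
def emb23sh (wt : α → (Fin m → ℂ)) (c : ℂ)
    (F : (Fin m → ℂ) → Matrix (β × γ) (β × γ) ℂ) (lam : Fin m → ℂ) :
    Matrix (α × β × γ) (α × β × γ) ℂ :=
  fun p q => F (lam + c • wt p.1) (p.2.1, p.2.2) (q.2.1, q.2.2) *
    (if p.1 = q.1 then 1 else 0)

/-- plain (unshifted) embedding into factors 1,2. -/
def emb12p (M : Matrix (α × β) (α × β) ℂ) : Matrix (α × β × γ) (α × β × γ) ℂ :=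
  fun p q => M (p.1, p.2.1) (q.1, q.2.1) * (if p.2.2 = q.2.2 then 1 else 0)

/-- plain embedding into factors 1,3. -/
def emb13p (M : Matrix (α × γ) (α × γ) ℂ) : Matrix (α × β × γ) (α × β × γ) ℂ :=
  fun p q => M (p.1, p.2.2) (q.1, q.2.2) * (if p.2.1 = q.2.1 then 1 else 0)

/-- plain embedding into factors 2,3. -/
def emb23p (M : Matrix (β × γ) (β × γ) ℂ) : Matrix (α × β × γ) (α × β × γ) ℂ :=
  fun p q => M (p.2.1, p.2.2) (q.2.1, q.2.2) * (if p.1 = q.1 then 1 else 0)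

/-- weight-zero condition on a matrix on a two-fold tensor product:
`[X^{(1)} + X^{(2)}, F] = 0` for all `X ∈ 𝔥`. -/
def WeightZero2 (wtA : α → (Fin m → ℂ)) (wtB : β → (Fin m → ℂ))
    (F : Matrix (α × β) (α × β) ℂ) : Prop :=
  ∀ X : Fin m → ℂ,
    Matrix.diagonal (fun p : α × β => pairH (wtA p.1) X + pairH (wtB p.2) X) * F =
    F * Matrix.diagonal (fun p : α × β => pairH (wtA p.1) X + pairH (wtB p.2) X)

end Emb

section RMat

variable {ι : Type*} [Fintype ι] [DecidableEq ι]

/-- the flip `P` of `V ⊗ V`. -/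
def flipP : Matrix (ι × ι) (ι × ι) ℂ := fun p q => if p.1 = q.2 ∧ p.2 = q.1 then 1 else 0

/-- the modified (dynamical) Yang–Baxter equation
`R^{(12)}(z₁₂,λ+ηh^{(3)}) R^{(13)}(z₁₃,λ−ηh^{(2)}) R^{(23)}(z₂₃,λ+ηh^{(1)}) =
 R^{(23)}(z₂₃,λ−ηh^{(1)}) R^{(13)}(z₁₃,λ+ηh^{(2)}) R^{(12)}(z₁₂,λ−ηh^{(3)})`. -/
def MYBE (wt : ι → (Fin m → ℂ)) (η : ℂ)
    (R : ℂ → (Fin m → ℂ) → Matrix (ι × ι) (ι × ι) ℂ) : Prop :=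
  ∀ z₁ z₂ z₃ lam,
    emb12sh wt η (R (z₁ - z₂)) lam * emb13sh wt (-η) (R (z₁ - z₃)) lam *
        emb23sh wt η (R (z₂ - z₃)) lam =
      emb23sh wt (-η) (R (z₂ - z₃)) lam * emb13sh wt η (R (z₁ - z₃)) lam *
        emb12sh wt (-η) (R (z₁ - z₂)) lam

/-- unitarity `R^{(12)}(z,λ) R^{(21)}(−z,λ) = Id`. -/
def RUnitary (R : ℂ → (Fin m → ℂ) → Matrix (ι × ι) (ι × ι) ℂ) : Prop :=
  ∀ z lam, R z lam * (flipP * R (-z) lam * flipP) = 1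

/-- a generalized quantum R-matrix: a weight-zero unitary solution of the
modified Yang–Baxter equation. -/
def IsGenR (wt : ι → (Fin m → ℂ)) (η : ℂ)
    (R : ℂ → (Fin m → ℂ) → Matrix (ι × ι) (ι × ι) ℂ) : Prop :=
  MYBE wt η R ∧ RUnitary R ∧ ∀ z lam, WeightZero2 wt wt (R z lam)

end RMat

section Rep

variable {ι κ : Type*} [Fintype ι] [DecidableEq ι] [Fintype κ] [DecidableEq κ]

/-- the RLL relation defining representations of the elliptic quantum group
`A(R)`:
`R^{(12)}(z₁₂,λ+ηh^{(3)}) L^{(13)}(z₁,λ−ηh^{(2)}) L^{(23)}(z₂,λ+ηh^{(1)}) =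
 L^{(23)}(z₂,λ−ηh^{(1)}) L^{(13)}(z₁,λ+ηh^{(2)}) R^{(12)}(z₁₂,λ−ηh^{(3)})`
in `End(V ⊗ V ⊗ W)`. -/
def RLL (wt : ι → (Fin m → ℂ)) (wtW : κ → (Fin m → ℂ)) (η : ℂ)
    (R : ℂ → (Fin m → ℂ) → Matrix (ι × ι) (ι × ι) ℂ)
    (L : ℂ → (Fin m → ℂ) → Matrix (ι × κ) (ι × κ) ℂ) : Prop :=
  ∀ z₁ z₂ lam,
    emb12sh wtW η (R (z₁ - z₂)) lam * emb13sh wt (-η) (L z₁) lam *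
        emb23sh wt η (L z₂) lam =
      emb23sh wt (-η) (L z₂) lam * emb13sh wt η (L z₁) lam *
        emb12sh wtW (-η) (R (z₁ - z₂)) lam

/-- a representation of `A(R)`: a weight-zero `L`-operator satisfying `RLL`. -/
def IsRep (wt : ι → (Fin m → ℂ)) (wtW : κ → (Fin m → ℂ)) (η : ℂ)
    (R : ℂ → (Fin m → ℂ) → Matrix (ι × ι) (ι × ι) ℂ)
    (L : ℂ → (Fin m → ℂ) → Matrix (ι × κ) (ι × κ) ℂ) : Prop :=
  RLL wt wtW η R L ∧ ∀ z lam, WeightZero2 wt wtW (L z lam)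

end Rep

section Face

variable {ι : Type*} [Fintype ι] [DecidableEq ι]

/-- the projection `E[μ] ⊗ E[ν]` onto `V[μ] ⊗ V[ν]` inside `V ⊗ V`. -/
def projK (wt : ι → (Fin m → ℂ)) (μ ν : Fin m → ℂ) :
    Matrix (ι × ι) (ι × ι) ℂ :=
  Matrix.diagonal (fun p =>
    (if wt p.1 = μ then 1 else 0) * (if wt p.2 = ν then 1 else 0))

/-- the face (Boltzmann) weight
`W(a,b,c,d,z,λ) = (E[c−b]⊗E[b−a]) R(z, λ+ηa+ηc)|_{V[d−a]⊗V[c−d]}`. -/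
def face (wt : ι → (Fin m → ℂ)) (η : ℂ)
    (R : ℂ → (Fin m → ℂ) → Matrix (ι × ι) (ι × ι) ℂ)
    (a b c d : Fin m → ℂ) (z : ℂ) (lam : Fin m → ℂ) :
    Matrix (ι × ι) (ι × ι) ℂ :=
  projK wt (c - b) (b - a) * R z (lam + η • a + η • c) * projK wt (d - a) (c - d)

/-- the face weight at `λ = 0`: `W(a,b,c,d,z) = W(a,b,c,d,z,0)`. -/
def face0 (wt : ι → (Fin m → ℂ)) (η : ℂ)
    (R : ℂ → (Fin m → ℂ) → Matrix (ι × ι) (ι × ι) ℂ)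
    (a b c d : Fin m → ℂ) (z : ℂ) : Matrix (ι × ι) (ι × ι) ℂ :=
  face wt η R a b c d z 0

end Face


section AuxLemmas

variable {ι : Type*} [Fintype ι] [DecidableEq ι]

lemma flipP_mul (M : Matrix (ι × ι) (ι × ι) ℂ) :
    flipP * M = M.submatrix Prod.swap id := by
  ext p q
  rw [Matrix.mul_apply, Finset.sum_eq_single (p.2, p.1)]
  · simp [flipP, Prod.swap]
  · intro r _ hr
    simp only [flipP]
    rw [if_neg, zero_mul]
    rintro ⟨h1, h2⟩
    exact hr (by cases r; cases p; simp_all)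
  · intro h; exact absurd (Finset.mem_univ _) h

lemma mul_flipP (M : Matrix (ι × ι) (ι × ι) ℂ) :
    M * flipP = M.submatrix id Prod.swap := by
  ext p q
  rw [Matrix.mul_apply, Finset.sum_eq_single (q.2, q.1)]
  · simp [flipP, Prod.swap]
  · intro r _ hr
    simp only [flipP]
    rw [if_neg, mul_zero]
    rintro ⟨h1, h2⟩
    exact hr (by cases r; cases q; simp_all)
  · intro h; exact absurd (Finset.mem_univ _) h

lemma flipP_mul_flipP : (flipP : Matrix (ι × ι) (ι × ι) ℂ) * flipP = 1 := by
  rw [flipP_mul]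
  ext p q
  simp [flipP, Matrix.one_apply, Prod.ext_iff, and_comm]

lemma flip_conj_diag (f : ι × ι → ℂ) :
    flipP * Matrix.diagonal f * flipP = Matrix.diagonal (fun p => f (p.2, p.1)) := by
  rw [flipP_mul, mul_flipP]
  ext p q
  by_cases h : p = q
  · subst h; simp [Matrix.diagonal_apply_eq, Prod.swap]
  · rw [Matrix.submatrix_apply, Matrix.submatrix_apply, Matrix.diagonal_apply_ne,
      Matrix.diagonal_apply_ne _ h]
    simp only [id]
    exact fun hc => h (by cases p; cases q; simp_all [Prod.ext_iff])

lemma flip_projK (wt : ι → (Fin m → ℂ)) (μ ν : Fin m → ℂ) :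
    flipP * projK wt μ ν * flipP = projK wt ν μ := by
  unfold projK
  rw [flip_conj_diag]
  refine congrArg Matrix.diagonal ?_
  funext p
  ring

lemma flip_conj3 (X Y Z : Matrix (ι × ι) (ι × ι) ℂ) :
    flipP * (X * Y * Z) * flipP =
      (flipP * X * flipP) * (flipP * Y * flipP) * (flipP * Z * flipP) := by
  have h1 : (flipP : Matrix (ι × ι) (ι × ι) ℂ) * flipP = 1 := flipP_mul_flipP
  simp only [Matrix.mul_assoc]
  rw [← Matrix.mul_assoc flipP flipP, h1, Matrix.one_mul,
    ← Matrix.mul_assoc flipP flipP, h1, Matrix.one_mul]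

lemma pairH_single (μ : Fin m → ℂ) (ν : Fin m) : pairH μ (Pi.single ν 1) = μ ν := by
  simp [pairH, Pi.single_apply, mul_ite, Finset.sum_ite_eq']

lemma wz_comm {wt : ι → (Fin m → ℂ)} {F : Matrix (ι × ι) (ι × ι) ℂ}
    (h : WeightZero2 wt wt F) (s : Fin m → ℂ) :
    Matrix.diagonal (fun p : ι × ι => if wt p.1 + wt p.2 = s then (1:ℂ) else 0) * F =
      F * Matrix.diagonal (fun p : ι × ι => if wt p.1 + wt p.2 = s then (1:ℂ) else 0) := by
  ext p q
  rw [Matrix.diagonal_mul, Matrix.mul_diagonal]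
  by_cases hF : F p q = 0
  · simp [hF]
  · have hw : wt p.1 + wt p.2 = wt q.1 + wt q.2 := by
      funext ν
      have h2 := Matrix.ext_iff.mpr (h (Pi.single ν 1)) p q
      rw [Matrix.diagonal_mul, Matrix.mul_diagonal, pairH_single, pairH_single,
        pairH_single, pairH_single, mul_comm] at h2
      have := mul_left_cancel₀ hF h2
      simpa [Pi.add_apply] using this
    rw [hw, mul_comm]

lemma projK_mul_self (wt : ι → (Fin m → ℂ)) (μ ν : Fin m → ℂ) :
    projK wt μ ν * projK wt μ ν = projK wt μ ν := by
  simp only [projK, Matrix.diagonal_mul_diagonal]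
  refine congrArg Matrix.diagonal ?_
  funext p
  split_ifs <;> ring

lemma sum_projK (wt : ι → (Fin m → ℂ)) (a c : Fin m → ℂ) :
    ∑ g ∈ Finset.univ.image (fun i : ι => a + wt i), projK wt (c - g) (g - a) =
      Matrix.diagonal (fun p : ι × ι => if wt p.1 + wt p.2 = c - a then (1:ℂ) else 0) := by
  ext p q
  rw [Matrix.sum_apply]
  by_cases hpq : p = q
  · subst hpq
    simp only [projK, Matrix.diagonal_apply_eq]
    rw [Finset.sum_eq_single (a + wt p.2)]
    · have hcond : (wt p.1 = c - (a + wt p.2)) ↔ (wt p.1 + wt p.2 = c - a) := by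
        rw [eq_sub_iff_add_eq, eq_sub_iff_add_eq]
        constructor <;> intro h <;> (rw [← h]; abel)
      rw [add_sub_cancel_left, if_pos rfl, mul_one]
      exact if_congr hcond rfl rfl
    · intro g _ hne
      have hn : ¬ wt p.2 = g - a := fun h => hne (by rw [h, add_sub_cancel])
      rw [if_neg hn, mul_zero]
    · intro h
      exact absurd (Finset.mem_image.mpr ⟨p.2, Finset.mem_univ _, rfl⟩) h
  · simp [projK, Matrix.diagonal_apply_ne _ hpq]

lemma diag_mul_projK (wt : ι → (Fin m → ℂ)) (a c d : Fin m → ℂ) :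
    Matrix.diagonal (fun p : ι × ι => if wt p.1 + wt p.2 = c - a then (1:ℂ) else 0) *
      projK wt (d - a) (c - d) = projK wt (d - a) (c - d) := by
  simp only [projK, Matrix.diagonal_mul_diagonal]
  refine congrArg Matrix.diagonal ?_
  funext p
  by_cases h1 : wt p.1 = d - a
  · by_cases h2 : wt p.2 = c - d
    · rw [if_pos (show wt p.1 + wt p.2 = c - a by rw [h1, h2]; abel)]; ring
    · simp [h2]
  · simp [h1]

lemma projK_mul_projK (wt : ι → (Fin m → ℂ)) (a b c d : Fin m → ℂ) :
    projK wt (b - a) (c - b) * projK wt (d - a) (c - d) =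
      if b = d then projK wt (d - a) (c - d) else 0 := by
  by_cases h : b = d
  · subst h
    rw [if_pos rfl, projK_mul_self]
  · rw [if_neg h]
    simp only [projK, Matrix.diagonal_mul_diagonal]
    ext p q
    rw [Matrix.zero_apply]
    by_cases hpq : p = q
    · subst hpq
      rw [Matrix.diagonal_apply_eq]
      by_cases h1 : wt p.1 = b - a
      · have h3 : ¬ wt p.1 = d - a := fun hc => h (sub_left_inj.mp (h1.symm.trans hc))
        simp [if_neg h3]
      · simp [h1]
    · rw [Matrix.diagonal_apply_ne _ hpq]

end AuxLemmas

/-- if `R` is weight zero and unitary,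
`R(z,λ) R^{(21)}(−z,λ) = Id`, then the associated face weights satisfy
`Σ_g W(a,g,c,d,z) W(a,b,c,g,−z) = δ_{b,d} Id_{V[d−a]⊗V[c−d]}` (the sum over
`g` with `g−a` a weight of `V`; the composition of the two face weights is
taken through the flip identification `V[g−a]⊗V[c−g] ≅ V[c−g]⊗V[g−a]`). -/
theorem face_unitarity
    {ι : Type*} [Fintype ι] [DecidableEq ι]
    (wt : ι → (Fin m → ℂ)) (η : ℂ)
    (R : ℂ → (Fin m → ℂ) → Matrix (ι × ι) (ι × ι) ℂ)
    (hwz : ∀ z lam, WeightZero2 wt wt (R z lam))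
    (hunit : RUnitary R)
    (a b c d : Fin m → ℂ) (z : ℂ) :
    ∑ g ∈ Finset.univ.image (fun i => a + wt i),
        (flipP * face0 wt η R a b c g (-z) * flipP) * face0 wt η R a g c d z =
      if b = d then projK wt (d - a) (c - d) else 0 := by
  classical
  simp only [face0, face]
  set lam : Fin m → ℂ := 0 + η • a + η • c with hlam
  set Rt : Matrix (ι × ι) (ι × ι) ℂ := flipP * R (-z) lam * flipP with hRt
  have hterm : ∀ g ∈ Finset.univ.image (fun i => a + wt i),
      (flipP * (projK wt (c - b) (b - a) * R (-z) lam * projK wt (g - a) (c - g)) * flipP) *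
        (projK wt (c - g) (g - a) * R z lam * projK wt (d - a) (c - d)) =
      projK wt (b - a) (c - b) *
        (Rt * (projK wt (c - g) (g - a) * (R z lam * projK wt (d - a) (c - d)))) := by
    intro g _
    rw [flip_conj3, flip_projK, flip_projK]
    calc projK wt (b - a) (c - b) * Rt * projK wt (c - g) (g - a) *
          (projK wt (c - g) (g - a) * R z lam * projK wt (d - a) (c - d))
        = projK wt (b - a) (c - b) *
          (Rt * ((projK wt (c - g) (g - a) * projK wt (c - g) (g - a)) *
            (R z lam * projK wt (d - a) (c - d)))) := by
          simp only [Matrix.mul_assoc]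
      _ = _ := by rw [projK_mul_self]
  rw [Finset.sum_congr rfl hterm]
  rw [← Finset.mul_sum]
  rw [← Finset.mul_sum]
  rw [← Finset.sum_mul]
  rw [sum_projK]
  have hD : (Matrix.diagonal fun p : ι × ι => if wt p.1 + wt p.2 = c - a then (1:ℂ) else 0) *
      (R z lam * projK wt (d - a) (c - d)) = R z lam * projK wt (d - a) (c - d) := by
    rw [← Matrix.mul_assoc, wz_comm (hwz z lam) (c - a), Matrix.mul_assoc, diag_mul_projK]
  rw [hD, ← Matrix.mul_assoc Rt, hRt, mul_eq_one_comm.mp (hunit z lam),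
    Matrix.one_mul, projK_mul_projK]
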